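/- Let n ≥ 1, let A, B ∈ ℙ_n, and let t ∈ ℝ. Then the system of equations A = X^{-t} Y X^{-t} and B = X^{1−t} Y X^{1−t} has a unique solution (X, Y) ∈ ℙ_n × ℙ_n, namely (X, Y) = (A^{-1} # B, A ♮_t B). -/

import Mathlib

open Matrix
open scoped ComplexOrder

/-- Real power `A^t = exp(t · log A)` of a Hermitian positive definite matrix, defined via
the functional calculus (spectral decomposition). -/
noncomputable def mpow {n : ℕ} (A : Matrix (Fin n) (Fin n) ℂ) (t : ℝ) :
    Matrix (Fin n) (Fin n) ℂ :=
  if hA : A.IsHermitian then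
    (hA.eigenvectorUnitary : Matrix (Fin n) (Fin n) ℂ) *
      Matrix.diagonal (fun i => ((hA.eigenvalues i ^ t : ℝ) : ℂ)) *
      (star (hA.eigenvectorUnitary : Matrix (Fin n) (Fin n) ℂ))
  else A

/-- Logarithm of a Hermitian positive definite matrix via the functional calculus. -/
noncomputable def mlog {n : ℕ} (A : Matrix (Fin n) (Fin n) ℂ) : Matrix (Fin n) (Fin n) ℂ :=
  if hA : A.IsHermitian then
    (hA.eigenvectorUnitary : Matrix (Fin n) (Fin n) ℂ) *
      Matrix.diagonal (fun i => ((Real.log (hA.eigenvalues i) : ℝ) : ℂ)) *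
      (star (hA.eigenvectorUnitary : Matrix (Fin n) (Fin n) ℂ))
  else A

/-- Metric geometric mean `A # B = A^{1/2} (A^{-1/2} B A^{-1/2})^{1/2} A^{1/2}`. -/
noncomputable def geomMean {n : ℕ} (A B : Matrix (Fin n) (Fin n) ℂ) :
    Matrix (Fin n) (Fin n) ℂ :=
  mpow A (1/2) * mpow (mpow A (-(1/2)) * B * mpow A (-(1/2))) (1/2) * mpow A (1/2)

/-- Weighted spectral geometric mean `A ♮_t B = (A⁻¹ # B)^t A (A⁻¹ # B)^t`. -/
noncomputable def spectralMean {n : ℕ} (t : ℝ) (A B : Matrix (Fin n) (Fin n) ℂ) :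
    Matrix (Fin n) (Fin n) ℂ :=
  mpow (geomMean A⁻¹ B) t * A * mpow (geomMean A⁻¹ B) t

section Aux

variable {n : ℕ}

lemma mpow_eq {A : Matrix (Fin n) (Fin n) ℂ} (hA : A.IsHermitian) (t : ℝ) :
    mpow A t = (hA.eigenvectorUnitary : Matrix (Fin n) (Fin n) ℂ) *
      Matrix.diagonal (fun i => ((hA.eigenvalues i ^ t : ℝ) : ℂ)) *
      (star (hA.eigenvectorUnitary : Matrix (Fin n) (Fin n) ℂ)) := dif_pos hA

lemma posDef_conj {A : Matrix (Fin n) (Fin n) ℂ} (hA : A.PosDef)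
    {B : Matrix (Fin n) (Fin n) ℂ} (hB : IsUnit B) : (B * A * Bᴴ).PosDef := by
  exact hA.mul_mul_conjTranspose_same (Matrix.vecMul_injective_iff_isUnit.mpr hB)

lemma mpow_isHermitian {A : Matrix (Fin n) (Fin n) ℂ} (hA : A.IsHermitian) (t : ℝ) :
    (mpow A t).IsHermitian := by
  rw [mpow_eq hA]
  have hD : (Matrix.diagonal fun i => ((hA.eigenvalues i ^ t : ℝ) : ℂ)).IsHermitian :=
    Matrix.isHermitian_diagonal_of_self_adjoint _ (funext fun i => Complex.conj_ofReal _)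
  simpa [Matrix.star_eq_conjTranspose] using
    Matrix.isHermitian_mul_mul_conjTranspose
      (hA.eigenvectorUnitary : Matrix (Fin n) (Fin n) ℂ) hD

lemma mpow_posDef {A : Matrix (Fin n) (Fin n) ℂ} (hA : A.PosDef) (t : ℝ) :
    (mpow A t).PosDef := by
  rw [mpow_eq hA.1]
  have hD : (Matrix.diagonal fun i => ((hA.1.eigenvalues i ^ t : ℝ) : ℂ)).PosDef :=
    Matrix.PosDef.diagonal fun i => Complex.zero_lt_real.mpr
      (Real.rpow_pos_of_pos (hA.eigenvalues_pos i) t)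
  have hU : IsUnit (hA.1.eigenvectorUnitary : Matrix (Fin n) (Fin n) ℂ) :=
    ⟨⟨_, star (hA.1.eigenvectorUnitary : Matrix (Fin n) (Fin n) ℂ),
      (Matrix.mem_unitaryGroup_iff).mp (hA.1.eigenvectorUnitary).2,
      (Matrix.mem_unitaryGroup_iff').mp (hA.1.eigenvectorUnitary).2⟩, rfl⟩
  simpa [Matrix.star_eq_conjTranspose] using posDef_conj hD hU

lemma mpow_mul_mpow {A : Matrix (Fin n) (Fin n) ℂ} (hA : A.PosDef) (s t : ℝ) :
    mpow A s * mpow A t = mpow A (s + t) := by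
  rw [mpow_eq hA.1, mpow_eq hA.1, mpow_eq hA.1]
  set U := (hA.1.eigenvectorUnitary : Matrix (Fin n) (Fin n) ℂ) with hUdef
  have hUU : star U * U = 1 := (Matrix.mem_unitaryGroup_iff').mp (hA.1.eigenvectorUnitary).2
  have key : ∀ i, ((hA.1.eigenvalues i ^ s : ℝ) : ℂ) * ((hA.1.eigenvalues i ^ t : ℝ) : ℂ)
      = ((hA.1.eigenvalues i ^ (s + t) : ℝ) : ℂ) := fun i => by
    rw [← Complex.ofReal_mul, ← Real.rpow_add (hA.eigenvalues_pos i)]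
  calc U * Matrix.diagonal (fun i => ((hA.1.eigenvalues i ^ s : ℝ) : ℂ)) * star U *
        (U * Matrix.diagonal (fun i => ((hA.1.eigenvalues i ^ t : ℝ) : ℂ)) * star U)
      = U * (Matrix.diagonal (fun i => ((hA.1.eigenvalues i ^ s : ℝ) : ℂ)) * ((star U * U) *
          Matrix.diagonal (fun i => ((hA.1.eigenvalues i ^ t : ℝ) : ℂ)))) * star U := by
        simp only [mul_assoc]
    _ = U * Matrix.diagonal (fun i => ((hA.1.eigenvalues i ^ (s + t) : ℝ) : ℂ)) * star U := by
        rw [hUU, one_mul, Matrix.diagonal_mul_diagonal,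
          show (fun i => ((hA.1.eigenvalues i ^ s : ℝ) : ℂ) * ((hA.1.eigenvalues i ^ t : ℝ) : ℂ))
            = fun i => ((hA.1.eigenvalues i ^ (s + t) : ℝ) : ℂ) from funext key]

lemma mpow_zero {A : Matrix (Fin n) (Fin n) ℂ} (hA : A.IsHermitian) : mpow A 0 = 1 := by
  rw [mpow_eq hA]
  simp only [Real.rpow_zero, Complex.ofReal_one, Matrix.diagonal_one, mul_one]
  exact (Matrix.mem_unitaryGroup_iff).mp (hA.eigenvectorUnitary).2

lemma mpow_one {A : Matrix (Fin n) (Fin n) ℂ} (hA : A.IsHermitian) : mpow A 1 = A := by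
  rw [mpow_eq hA]
  simp only [Real.rpow_one]
  exact hA.spectral_theorem.symm

lemma mul_mul_cancel {a b : Matrix (Fin n) (Fin n) ℂ} (h : a * b = 1)
    (x : Matrix (Fin n) (Fin n) ℂ) : a * (b * x) = x := by
  rw [← mul_assoc, h, one_mul]

lemma mpow_isUnit {A : Matrix (Fin n) (Fin n) ℂ} (hA : A.PosDef) (s : ℝ) :
    IsUnit (mpow A s) := by
  have h1 : mpow A s * mpow A (-s) = 1 := by
    rw [mpow_mul_mpow hA, add_neg_cancel, mpow_zero hA.1]
  have h2 : mpow A (-s) * mpow A s = 1 := by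
    rw [mpow_mul_mpow hA, neg_add_cancel, mpow_zero hA.1]
  exact ⟨⟨_, mpow A (-s), h1, h2⟩, rfl⟩

end Aux

theorem system_unique_solution {n : ℕ} (hn : 1 ≤ n) (A B : Matrix (Fin n) (Fin n) ℂ)
    (hA : A.PosDef) (hB : B.PosDef) (t : ℝ) :
    (geomMean A⁻¹ B).PosDef ∧ (spectralMean t A B).PosDef ∧
    A = mpow (geomMean A⁻¹ B) (-t) * spectralMean t A B * mpow (geomMean A⁻¹ B) (-t) ∧
    B = mpow (geomMean A⁻¹ B) (1 - t) * spectralMean t A B * mpow (geomMean A⁻¹ B) (1 - t) ∧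
    ∀ X Y : Matrix (Fin n) (Fin n) ℂ, X.PosDef → Y.PosDef →
      A = mpow X (-t) * Y * mpow X (-t) → B = mpow X (1 - t) * Y * mpow X (1 - t) →
      X = geomMean A⁻¹ B ∧ Y = spectralMean t A B := by
  have hP : (A⁻¹).PosDef := hA.inv
  set C := mpow A⁻¹ (1/2) with hCdef
  set D := mpow A⁻¹ (-(1/2)) with hDdef
  have hC : C.PosDef := mpow_posDef hP _
  have hD : D.PosDef := mpow_posDef hP _
  have hCD : C * D = 1 := by
    rw [hCdef, hDdef, mpow_mul_mpow hP, show (1/2 : ℝ) + -(1/2) = 0 by norm_num,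
      mpow_zero hP.1]
  have hDC : D * C = 1 := by
    rw [hCdef, hDdef, mpow_mul_mpow hP, show -(1/2 : ℝ) + 1/2 = 0 by norm_num,
      mpow_zero hP.1]
  have hCC : C * C = A⁻¹ := by
    rw [hCdef, mpow_mul_mpow hP, show (1/2 : ℝ) + 1/2 = 1 by norm_num, mpow_one hP.1]
  have hAd : IsUnit A.det := (Matrix.isUnit_iff_isUnit_det A).mp hA.isUnit
  have hAA : A * A⁻¹ = 1 := Matrix.mul_nonsing_inv A hAd
  have hA'A : A⁻¹ * A = 1 := Matrix.nonsing_inv_mul A hAd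
  have hDunit : IsUnit D := ⟨⟨D, C, hDC, hCD⟩, rfl⟩
  have hCunit : IsUnit C := ⟨⟨C, D, hCD, hDC⟩, rfl⟩
  have hDD : D * D = A := by
    have h1 : D * D = mpow A⁻¹ (-1) := by
      rw [hDdef, mpow_mul_mpow hP, show -(1/2 : ℝ) + -(1/2) = -1 by norm_num]
    have h2 : mpow A⁻¹ (-1) * mpow A⁻¹ 1 = 1 := by
      rw [mpow_mul_mpow hP, neg_add_cancel, mpow_zero hP.1]
    have h3 : mpow A⁻¹ (-1) * A⁻¹ = 1 := by rwa [mpow_one hP.1] at h2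
    have h4 : mpow A⁻¹ (-1) = A := by
      have h5 := congrArg (· * A) h3
      simpa [mul_assoc, hA'A] using h5
    rw [h1, h4]
  set M := D * B * D with hMdef
  have hM : M.PosDef := by
    have := posDef_conj hB hDunit
    rwa [hD.1] at this
  set S := mpow M (1/2) with hSdef
  have hS : S.PosDef := mpow_posDef hM _
  have hSS : S * S = M := by
    rw [hSdef, mpow_mul_mpow hM, show (1/2 : ℝ) + 1/2 = 1 by norm_num, mpow_one hM.1]
  have hG : geomMean A⁻¹ B = C * S * C := rfl
  have hGpos : (geomMean A⁻¹ B).PosDef := by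
    rw [hG]
    have := posDef_conj hS hCunit
    rwa [hC.1] at this
  have hCiA : C * A⁻¹ = A⁻¹ * C := by
    rw [← hCC]; exact (mul_assoc C C C).symm
  have hCA : C * A = A * C := by
    calc C * A = (A * A⁻¹) * (C * A) := by rw [hAA, one_mul]
      _ = A * (A⁻¹ * C) * A := by simp only [mul_assoc]
      _ = A * (C * A⁻¹) * A := by rw [hCiA]
      _ = A * C * (A⁻¹ * A) := by simp only [mul_assoc]
      _ = A * C := by rw [hA'A, mul_one]
  have hCAC : C * A * C = 1 := by
    calc C * A * C = A * (C * C) := by rw [hCA, mul_assoc]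
      _ = 1 := by rw [hCC, hAA]
  have hGAG : geomMean A⁻¹ B * A * geomMean A⁻¹ B = B := by
    rw [hG]
    calc C * S * C * A * (C * S * C)
        = C * (S * ((C * A * C) * (S * C))) := by simp only [mul_assoc]
      _ = C * (S * (S * C)) := by rw [hCAC, one_mul]
      _ = C * ((S * S) * C) := by simp only [mul_assoc]
      _ = C * (D * B * D * C) := by rw [hSS, hMdef]
      _ = (C * D) * B * (D * C) := by simp only [mul_assoc]
      _ = B := by rw [hCD, hDC, one_mul, mul_one]
  have hSM : spectralMean t A B
      = mpow (geomMean A⁻¹ B) t * A * mpow (geomMean A⁻¹ B) t := rfl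
  have hSpd : (spectralMean t A B).PosDef := by
    rw [hSM]
    have := posDef_conj hA (mpow_isUnit hGpos t)
    rwa [mpow_isHermitian hGpos.1 t] at this
  refine ⟨hGpos, hSpd, ?_, ?_, ?_⟩
  · rw [hSM]
    have e1 : mpow (geomMean A⁻¹ B) (-t) * mpow (geomMean A⁻¹ B) t = 1 := by
      rw [mpow_mul_mpow hGpos, neg_add_cancel, mpow_zero hGpos.1]
    have e2 : mpow (geomMean A⁻¹ B) t * mpow (geomMean A⁻¹ B) (-t) = 1 := by
      rw [mpow_mul_mpow hGpos, add_neg_cancel, mpow_zero hGpos.1]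
    symm
    calc mpow (geomMean A⁻¹ B) (-t) * (mpow (geomMean A⁻¹ B) t * A * mpow (geomMean A⁻¹ B) t)
          * mpow (geomMean A⁻¹ B) (-t)
        = (mpow (geomMean A⁻¹ B) (-t) * mpow (geomMean A⁻¹ B) t) * A *
            (mpow (geomMean A⁻¹ B) t * mpow (geomMean A⁻¹ B) (-t)) := by simp only [mul_assoc]
      _ = A := by rw [e1, e2, one_mul, mul_one]
  · rw [hSM]
    have e3 : mpow (geomMean A⁻¹ B) (1 - t) * mpow (geomMean A⁻¹ B) t = geomMean A⁻¹ B := by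
      rw [mpow_mul_mpow hGpos, show (1 : ℝ) - t + t = 1 by ring, mpow_one hGpos.1]
    have e4 : mpow (geomMean A⁻¹ B) t * mpow (geomMean A⁻¹ B) (1 - t) = geomMean A⁻¹ B := by
      rw [mpow_mul_mpow hGpos, show t + ((1 : ℝ) - t) = 1 by ring, mpow_one hGpos.1]
    symm
    calc mpow (geomMean A⁻¹ B) (1 - t) * (mpow (geomMean A⁻¹ B) t * A * mpow (geomMean A⁻¹ B) t)
          * mpow (geomMean A⁻¹ B) (1 - t)
        = (mpow (geomMean A⁻¹ B) (1 - t) * mpow (geomMean A⁻¹ B) t) * A *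
            (mpow (geomMean A⁻¹ B) t * mpow (geomMean A⁻¹ B) (1 - t)) := by simp only [mul_assoc]
      _ = geomMean A⁻¹ B * A * geomMean A⁻¹ B := by rw [e3, e4]
      _ = B := hGAG
  · intro X Y hX hY h1 h2
    have f1 : mpow X t * mpow X (-t) = 1 := by
      rw [mpow_mul_mpow hX, add_neg_cancel, mpow_zero hX.1]
    have f2 : mpow X (-t) * mpow X t = 1 := by
      rw [mpow_mul_mpow hX, neg_add_cancel, mpow_zero hX.1]
    have hY2 : mpow X t * A * mpow X t = Y := by
      rw [h1]
      calc mpow X t * (mpow X (-t) * Y * mpow X (-t)) * mpow X t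
          = (mpow X t * mpow X (-t)) * Y * (mpow X (-t) * mpow X t) := by simp only [mul_assoc]
        _ = Y := by rw [f1, f2, one_mul, mul_one]
    have f5 : mpow X (1 - t) * mpow X t = X := by
      rw [mpow_mul_mpow hX, show (1 : ℝ) - t + t = 1 by ring, mpow_one hX.1]
    have f6 : mpow X t * mpow X (1 - t) = X := by
      rw [mpow_mul_mpow hX, show t + ((1 : ℝ) - t) = 1 by ring, mpow_one hX.1]
    have hXAX : X * A * X = B := by
      rw [h2, ← hY2]
      calc X * A * X = (mpow X (1 - t) * mpow X t) * A * (mpow X t * mpow X (1 - t)) := by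
            rw [f5, f6]
        _ = mpow X (1 - t) * (mpow X t * A * mpow X t) * mpow X (1 - t) := by
            simp only [mul_assoc]
    set T := D * X * D with hTdef
    have hT : T.PosDef := by
      have := posDef_conj hX hDunit
      rwa [hD.1] at this
    have hTT : T * T = M := by
      calc T * T = D * (X * ((D * D) * (X * D))) := by rw [hTdef]; simp only [mul_assoc]
        _ = D * (X * (A * (X * D))) := by rw [hDD]
        _ = D * ((X * A * X) * D) := by simp only [mul_assoc]
        _ = D * (B * D) := by rw [hXAX]
        _ = M := by rw [hMdef, mul_assoc]
    have hTS : T = S :=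
      open scoped MatrixOrder in
        (CFC.sq_eq_sq_iff T S hT.posSemidef.nonneg hS.posSemidef.nonneg).mp
          (by rw [pow_two, pow_two, hTT, hSS])
    have hXG : X = geomMean A⁻¹ B := by
      rw [hG, ← hTS]
      calc X = (C * D) * X * (D * C) := by rw [hCD, hDC, one_mul, mul_one]
        _ = C * (D * X * D) * C := by simp only [mul_assoc]
        _ = C * T * C := by rw [← hTdef]
    refine ⟨hXG, ?_⟩
    rw [← hY2, hXG]
    exact hSM.symm
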